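/- Nagumo viability theorem (sufficiency, single smooth constraint): Let η : ℝⁿ → ℝ be C¹ with ∇η(x) ≠ 0 whenever η(x) = 0, and let M = {x : η(x) ≤ 0} be nonempty. Let f : I × ℝⁿ → ℝⁿ be continuous in t and locally Lipschitz in x. If (∇η(x), f(t,x)) ≤ 0 for all t ∈ Ω = (t₀,T) and all x with η(x) = 0, then every solution x(·) of ẋ = f(t,x) with x(t₀) ∈ M remains in M for all t ∈ Ω (on its interval of existence). -/

import Mathlib

open Filter Set Topology RealInnerProductSpace

lemma metreg {n : ℕ} (η : EuclideanSpace ℝ (Fin n) → ℝ) (hη : ContDiff ℝ 1 η)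
    (z : EuclideanSpace ℝ (Fin n)) (hz : η z = 0) (hgz : gradient η z ≠ 0) :
    ∃ C > (0:ℝ), ∃ r > (0:ℝ), ∀ y ∈ Metric.ball z r,
      Metric.infDist y {x | η x ≤ 0} ≤ C * max (η y) 0 := by
  have hdiff : Differentiable ℝ η := hη.differentiable one_ne_zero
  have hfd : Continuous (fderiv ℝ η) := (contDiff_one_iff_fderiv.1 hη).2
  set g := gradient η z with hg
  set v := (‖g‖ ^ 2)⁻¹ • g with hv
  have hinner : ∀ w u, ⟪gradient η w, u⟫ = fderiv ℝ η w u := fun w u =>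
    InnerProductSpace.toDual_symm_apply
  have hgv : fderiv ℝ η z v = 1 := by
    rw [← hinner z v, hv, real_inner_smul_right, real_inner_self_eq_norm_sq]
    field_simp [norm_ne_zero_iff.2 hgz]
    rfl
  have hcont : Continuous fun w => fderiv ℝ η w v :=
    (ContinuousLinearMap.apply ℝ ℝ v).continuous.comp hfd
  have hopen : {w | (1:ℝ)/2 < fderiv ℝ η w v} ∈ 𝓝 z := by
    refine (isOpen_lt continuous_const hcont).mem_nhds ?_
    simp [hgv]; norm_num
  obtain ⟨r₁, hr₁, hball₁⟩ := Metric.mem_nhds_iff.1 hopen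
  have hcη : ContinuousAt η z := hη.continuous.continuousAt
  obtain ⟨r₂, hr₂, hball₂⟩ := Metric.continuousAt_iff.1 hcη (r₁ / (4 * (‖v‖ + 1)))
    (by positivity)
  refine ⟨2 * ‖v‖ + 1, by positivity, min (r₁ / 2) r₂, by positivity, fun y hy => ?_⟩
  have hy₁ : dist y z < r₁ / 2 := lt_of_lt_of_le hy (min_le_left _ _)
  have hy₂ : |η y| < r₁ / (4 * (‖v‖ + 1)) := by
    have := hball₂ (lt_of_lt_of_le hy (min_le_right _ _))
    rwa [hz, Real.dist_eq, sub_zero] at this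
  by_cases hys : η y ≤ 0
  · rw [Metric.infDist_zero_of_mem (show y ∈ {x | η x ≤ 0} from hys)]
    positivity
  push_neg at hys
  set a := 2 * η y with ha
  have ha0 : 0 < a := by positivity
  have hmem : ∀ s ∈ Icc (0:ℝ) a, y - s • v ∈ Metric.ball z r₁ := by
    intro s hs
    have h1 : ‖s • v‖ ≤ a * ‖v‖ := by
      rw [norm_smul, Real.norm_eq_abs, abs_of_nonneg hs.1]
      exact mul_le_mul_of_nonneg_right hs.2 (norm_nonneg _)
    have h2 : a * ‖v‖ < r₁ / 2 := by
      have : η y < r₁ / (4 * (‖v‖ + 1)) := (le_abs_self _).trans_lt hy₂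
      have hvpos : (0:ℝ) < ‖v‖ + 1 := by positivity
      calc a * ‖v‖ = 2 * η y * ‖v‖ := rfl
        _ < 2 * (r₁ / (4 * (‖v‖ + 1))) * (‖v‖ + 1) := by
            apply mul_lt_mul' (by nlinarith) (by linarith) (norm_nonneg _)
            positivity
        _ = r₁ / 2 := by field_simp; ring
    calc dist (y - s • v) z ≤ dist (y - s • v) y + dist y z := dist_triangle _ _ _
      _ < r₁ / 2 + r₁ / 2 := by
          apply add_lt_add _ hy₁
          have : dist (y - s • v) y = ‖s • v‖ := by
            rw [dist_eq_norm]; simp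
          rw [this]; exact lt_of_le_of_lt h1 h2
      _ = r₁ := by ring
  -- mean value theorem along the segment
  set φ : ℝ → ℝ := fun s => η (y - s • v) with hφ
  have hφd : ∀ s : ℝ, HasDerivAt φ (fderiv ℝ η (y - s • v) (-v)) s := by
    intro s
    have h1 : HasDerivAt (fun s : ℝ => y - s • v) (-v) s := by
      simpa using ((hasDerivAt_id s).smul_const v).const_sub y
    exact (hdiff (y - s • v)).hasFDerivAt.comp_hasDerivAt s h1
  obtain ⟨c, hc, hslope⟩ := exists_hasDerivAt_eq_slope φ
    (fun s => fderiv ℝ η (y - s • v) (-v)) ha0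
    (fun s _ => (hφd s).continuousAt.continuousWithinAt) (fun s _ => hφd s)
  have hcball : y - c • v ∈ Metric.ball z r₁ := hmem c ⟨hc.1.le, hc.2.le⟩
  have hderiv_le : fderiv ℝ η (y - c • v) (-v) < -(1/2) := by
    have := hball₁ hcball
    simp only [mem_setOf_eq] at this
    rw [map_neg]
    linarith
  have hφa : φ a ≤ 0 := by
    have hφ0 : φ 0 = η y := by simp [hφ]
    have : (φ a - φ 0) / a < -(1/2) := by
      rw [sub_zero] at hslope
      rw [← hslope]; exact hderiv_le
    rw [div_lt_iff₀ ha0] at this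
    rw [hφ0] at this
    nlinarith
  have hwm : y - a • v ∈ {x | η x ≤ 0} := hφa
  calc Metric.infDist y {x | η x ≤ 0} ≤ dist y (y - a • v) :=
        Metric.infDist_le_dist_of_mem hwm
    _ = ‖a • v‖ := by rw [dist_eq_norm]; simp
    _ = a * ‖v‖ := by rw [norm_smul, Real.norm_eq_abs, abs_of_nonneg ha0.le]
    _ ≤ (2 * ‖v‖ + 1) * max (η y) 0 := by
        rw [max_eq_left hys.le]
        nlinarith [norm_nonneg v]


lemma nearest_boundary {n : ℕ} (η : EuclideanSpace ℝ (Fin n) → ℝ) (hη : ContDiff ℝ 1 η)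
    {y z : EuclideanSpace ℝ (Fin n)} (hy : ¬ η y ≤ 0) (hzM : η z ≤ 0)
    (hzd : dist y z = Metric.infDist y {x | η x ≤ 0}) : η z = 0 := by
  by_contra hne
  have hzlt : η z < 0 := lt_of_le_of_ne hzM hne
  have hyz : y ≠ z := fun h => hy (h ▸ hzM)
  have hdpos : 0 < dist y z := dist_pos.2 hyz
  have hcont : ContinuousAt (fun θ : ℝ => η (z + θ • (y - z))) 0 := by
    apply hη.continuous.continuousAt.comp
    exact (continuous_const.add ((continuous_id.smul continuous_const))).continuousAt
  have hev : ∀ᶠ θ in 𝓝 (0:ℝ), η (z + θ • (y - z)) < 0 := by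
    have h0 : η (z + (0:ℝ) • (y - z)) < 0 := by simpa using hzlt
    exact hcont.eventually_lt continuousAt_const h0
  have hevA : ∀ᶠ θ in 𝓝[>] (0:ℝ), η (z + θ • (y - z)) < 0 :=
    hev.filter_mono nhdsWithin_le_nhds
  have hevB : ∀ᶠ θ in 𝓝[>] (0:ℝ), θ ∈ Ioo (0:ℝ) 1 :=
    Ioo_mem_nhdsGT_of_mem (show (0:ℝ) ∈ Ico 0 1 by simp)
  obtain ⟨θ, hθη, hθ0, hθ1⟩ := (hevA.and hevB).exists
  have hmem : z + θ • (y - z) ∈ {x | η x ≤ 0} := le_of_lt hθη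
  have hdist : dist y (z + θ • (y - z)) = (1 - θ) * dist y z := by
    rw [dist_eq_norm, dist_eq_norm]
    have : y - (z + θ • (y - z)) = (1 - θ) • (y - z) := by
      rw [sub_smul, one_smul]; abel
    rw [this, norm_smul, Real.norm_eq_abs, abs_of_nonneg (by linarith)]
  have : Metric.infDist y {x | η x ≤ 0} ≤ (1 - θ) * dist y z :=
    hdist ▸ Metric.infDist_le_dist_of_mem hmem
  rw [← hzd] at this
  nlinarith


set_option maxHeartbeats 2000000 in
/-- Nagumo viability theorem (sufficiency, single smooth constraint):
if `η` is `C¹` with `∇η(x) ≠ 0` on `{η = 0}`, `M = {η ≤ 0}` is nonempty,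
`f` is continuous in `t` and locally Lipschitz in `x`, and
`(∇η(x), f(t,x)) ≤ 0` for all `t ∈ (t₀,T)` and `x` with `η(x) = 0`,
then any solution of `ẋ = f(t,x)` starting in `M` at `t₀` remains in `M` on `(t₀,T)`. -/
theorem stmt6 {n : ℕ} (η : EuclideanSpace ℝ (Fin n) → ℝ) (hη : ContDiff ℝ 1 η)
    (hgrad : ∀ x, η x = 0 → gradient η x ≠ 0)
    (hne : {x : EuclideanSpace ℝ (Fin n) | η x ≤ 0}.Nonempty)
    (t₀ T : ℝ)
    (f : ℝ → EuclideanSpace ℝ (Fin n) → EuclideanSpace ℝ (Fin n))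
    (hft : ∀ x, Continuous fun t => f t x)
    (hfx : ∀ p : EuclideanSpace ℝ (Fin n), ∃ K : NNReal, ∃ ε > (0:ℝ),
      ∀ t ∈ Set.Ioo t₀ T, LipschitzOnWith K (f t) (Metric.ball p ε))
    (htan : ∀ t ∈ Set.Ioo t₀ T, ∀ x, η x = 0 → ⟪gradient η x, f t x⟫ ≤ 0)
    (x : ℝ → EuclideanSpace ℝ (Fin n))
    (hx : ∀ t ∈ Set.Ico t₀ T, HasDerivAt x (f t (x t)) t)
    (hx0 : η (x t₀) ≤ 0) :
    ∀ t ∈ Set.Ioo t₀ T, η (x t) ≤ 0 := by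
  set M : Set (EuclideanSpace ℝ (Fin n)) := {x | η x ≤ 0} with hM
  have hMclosed : IsClosed M := isClosed_le hη.continuous continuous_const
  set d : ℝ → ℝ := fun t => Metric.infDist (x t) M with hd
  have hdnn : ∀ t, 0 ≤ d t := fun t => Metric.infDist_nonneg
  intro t₁ ht₁
  by_contra hcon
  push_neg at hcon
  have hxne : x t₁ ∉ M := fun h => absurd (show η (x t₁) ≤ 0 from h) (not_le.2 hcon)
  have hd1 : 0 < d t₁ := (hMclosed.notMem_iff_infDist_pos hne).1 hxne
  have hT : t₀ < T := ht₁.1.trans ht₁.2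
  have hxc : ∀ t ∈ Ico t₀ T, ContinuousAt x t := fun t ht => (hx t ht).continuousAt
  have hIccsub : Icc t₀ t₁ ⊆ Ico t₀ T := fun u hu => ⟨hu.1, lt_of_le_of_lt hu.2 ht₁.2⟩
  have hxcOn : ContinuousOn x (Icc t₀ t₁) := fun u hu =>
    (hxc u (hIccsub hu)).continuousWithinAt
  have hcd : ContinuousOn d (Icc t₀ t₁) :=
    (Metric.continuous_infDist_pt M).comp_continuousOn hxcOn
  set S : Set ℝ := {t | t ∈ Icc t₀ t₁ ∧ d t = 0} with hS
  have hd0 : d t₀ = 0 := Metric.infDist_zero_of_mem (show x t₀ ∈ M from hx0)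
  have ht₀S : t₀ ∈ S := ⟨⟨le_refl _, ht₁.1.le⟩, hd0⟩
  have hSbdd : BddAbove S := ⟨t₁, fun u hu => hu.1.2⟩
  have hSne : S.Nonempty := ⟨t₀, ht₀S⟩
  have hSclosed : IsClosed S := by
    have : S = Icc t₀ t₁ ∩ d ⁻¹' {0} := by
      ext u; simp [hS, mem_inter_iff, and_comm]
    rw [this]
    exact hcd.preimage_isClosed_of_isClosed isClosed_Icc isClosed_singleton
  set s : ℝ := sSup S with hs
  have hsS : s ∈ S := hSclosed.csSup_mem hSne hSbdd
  have hst₀ : t₀ ≤ s := hsS.1.1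
  have hst₁ : s ≤ t₁ := hsS.1.2
  have hds : d s = 0 := hsS.2
  have hslt : s < t₁ := lt_of_le_of_ne hst₁ (fun h => by rw [h] at hds; linarith)
  have hsT : s < T := lt_of_le_of_lt hst₁ ht₁.2
  have hpos : ∀ u, s < u → u ≤ t₁ → 0 < d u := by
    intro u hsu hut
    rcases lt_or_eq_of_le (hdnn u) with h | h
    · exact h
    · exact absurd (le_csSup hSbdd (⟨⟨hst₀.trans hsu.le, hut⟩, h.symm⟩ : u ∈ S))
        (not_le.2 hsu)
  set p := x s with hp
  have hpM : p ∈ M := (hMclosed.mem_iff_infDist_zero hne).2 hds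
  obtain ⟨K₀, ε₀, hε₀, hLipK⟩ := hfx p
  set K : ℝ := (K₀ : ℝ) + 1 with hKdef
  have hKpos : 0 < K := by positivity
  -- choose b
  obtain ⟨b, hsb, hbt₁, hballb⟩ :
      ∃ b, s < b ∧ b ≤ t₁ ∧ ∀ u ∈ Icc s b, dist (x u) p < ε₀ / 4 := by
    obtain ⟨δ, hδ, hδball⟩ := Metric.continuousAt_iff.1 (hxc s ⟨hst₀, hsT⟩) (ε₀ / 4)
      (by positivity)
    refine ⟨min (s + δ / 2) t₁, lt_min (by linarith) hslt, min_le_right _ _, ?_⟩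
    intro u hu
    apply hδball
    have h1 : u ≤ s + δ / 2 := hu.2.trans (min_le_left _ _)
    rw [Real.dist_eq, abs_of_nonneg (by linarith [hu.1])]
    linarith [hu.1]
  -- Gronwall
  have hgron : ∀ u ∈ Icc s b, d u ≤ gronwallBound 0 K 0 (u - s) := by
    apply le_gronwallBound_of_liminf_deriv_right_le (f' := fun t => K * d t)
    · exact hcd.mono (Icc_subset_Icc hst₀ hbt₁)
    · intro t ht r hr
      have htb : t < b := ht.2
      have htIco : t ∈ Ico t₀ T :=
        ⟨hst₀.trans ht.1, lt_of_lt_of_le htb (hbt₁.trans ht₁.2.le)⟩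
      have htball : dist (x t) p < ε₀ / 4 := hballb t ⟨ht.1, htb.le⟩
      have hrpos : 0 < r := lt_of_le_of_lt (mul_nonneg hKpos.le (hdnn t)) hr
      by_cases hcase : η (x t) < 0 ∧ d t = 0
      · -- interior case : d vanishes near t
        have hev : ∀ᶠ u in 𝓝 t, η (x u) < 0 :=
          ((hη.continuous.continuousAt).comp (hxc t htIco)).eventually_lt
            continuousAt_const hcase.1
        apply Filter.Eventually.frequently
        filter_upwards [hev.filter_mono nhdsWithin_le_nhds] with u hu
        have : d u = 0 := Metric.infDist_zero_of_mem (show x u ∈ M from hu.le)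
        rw [this, hcase.2]
        simpa using hrpos
      · -- boundary case
        obtain ⟨z, hzM, hzd, hz0⟩ :
            ∃ z, z ∈ M ∧ dist (x t) z = d t ∧ η z = 0 := by
          by_cases hdt0 : d t = 0
          · have hxtM : x t ∈ M := (hMclosed.mem_iff_infDist_zero hne).2 hdt0
            have hηxt : η (x t) = 0 := by
              rcases lt_or_eq_of_le (show η (x t) ≤ 0 from hxtM) with h | h
              · exact absurd ⟨h, hdt0⟩ hcase
              · exact h
            exact ⟨x t, hxtM, by simp [hdt0], hηxt⟩
          · obtain ⟨z, hzM, heq⟩ := hMclosed.exists_infDist_eq_dist hne (x t)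
            have hxtnM : ¬ η (x t) ≤ 0 := by
              intro h
              exact hdt0 (Metric.infDist_zero_of_mem (show x t ∈ M from h))
            exact ⟨z, hzM, heq.symm, nearest_boundary η hη hxtnM hzM heq.symm⟩
        have htan0 : ⟪gradient η z, f t z⟫ ≤ 0 := by
          rcases lt_or_eq_of_le htIco.1 with h | h
          · exact htan t ⟨h, htIco.2⟩ z hz0
          · have hlim : Tendsto (fun u => ⟪gradient η z, f u z⟫) (𝓝[>] t₀)
                (𝓝 ⟪gradient η z, f t z⟫) := by
              rw [h]
              exact ((continuous_const.inner (hft z)).tendsto t).mono_left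
                nhdsWithin_le_nhds
            apply le_of_tendsto hlim
            filter_upwards [Ioo_mem_nhdsGT_of_mem (left_mem_Ico.2 hT)] with u hu
            exact htan u hu z hz0
        have hdtp : d t ≤ dist (x t) p := Metric.infDist_le_dist_of_mem hpM
        have hzball : dist z p < ε₀ / 2 := by
          calc dist z p ≤ dist z (x t) + dist (x t) p := dist_triangle _ _ _
            _ = d t + dist (x t) p := by rw [dist_comm, hzd]
            _ < ε₀ / 4 + ε₀ / 4 := by
                exact add_lt_add (hdtp.trans_lt htball) htball
            _ = ε₀ / 2 := by ring
        have hLipt : ‖f t (x t) - f t z‖ ≤ (K₀ : ℝ) * d t := by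
          by_cases hdt0 : d t = 0
          · have : x t = z := by
              have : dist (x t) z = 0 := by rw [hzd, hdt0]
              exact dist_eq_zero.1 this
            rw [this, hdt0]; simp
          · have hst : s < t := by
              rcases lt_or_eq_of_le ht.1 with h | h
              · exact h
              · exact absurd (by rw [← h, hds]) hdt0
            have htIoo : t ∈ Ioo t₀ T := ⟨lt_of_le_of_lt hst₀ hst, htIco.2⟩
            have h1 : x t ∈ Metric.ball p ε₀ := by
              rw [Metric.mem_ball]; linarith
            have h2 : z ∈ Metric.ball p ε₀ := by
              rw [Metric.mem_ball]; linarith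
            have := (hLipK t htIoo).dist_le_mul (x t) h1 z h2
            rw [hzd] at this
            rwa [← dist_eq_norm]
        obtain ⟨C, hC, rz, hrz, hreg⟩ := metreg η hη z hz0 (hgrad z hz0)
        set w := f t z with hw
        set ζ : ℝ := (r - K * d t) / 4 with hζ
        have hζpos : 0 < ζ := by
          rw [hζ]; exact div_pos (sub_pos.2 hr) (by norm_num)
        -- E1 : from differentiability of x at t
        have hder := hx t htIco
        rw [hasDerivAt_iff_tendsto] at hder
        have hE1' : ∀ᶠ u in 𝓝 t, ‖u - t‖⁻¹ * ‖x u - x t - (u - t) • f t (x t)‖ < ζ :=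
          hder.eventually_lt_const hζpos
        have hE1 : ∀ᶠ u in 𝓝[>] t,
            ‖x u - x t - (u - t) • f t (x t)‖ ≤ ζ * (u - t) := by
          filter_upwards [hE1'.filter_mono nhdsWithin_le_nhds, self_mem_nhdsWithin]
            with u hu huI
          have hut : 0 < u - t := sub_pos.2 huI
          rw [Real.norm_eq_abs, abs_of_pos hut] at hu
          have := (inv_mul_lt_iff₀ hut).1 hu
          nlinarith
        -- E2 : tangency estimate
        have hE2 : ∀ᶠ h in 𝓝[>] (0:ℝ),
            Metric.infDist (z + h • w) M ≤ ζ * h := by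
          have hφder : HasDerivAt (fun h : ℝ => η (z + h • w)) (fderiv ℝ η z w) 0 := by
            have h1 : HasDerivAt (fun h : ℝ => z + h • w) w 0 := by
              simpa using ((hasDerivAt_id (0:ℝ)).smul_const w).const_add z
            have h2 := ((hη.differentiable one_ne_zero) (z + (0:ℝ) • w)).hasFDerivAt.comp_hasDerivAt 0 h1
            rw [zero_smul, add_zero] at h2
            exact h2
          have hfval : fderiv ℝ η z w ≤ 0 := by
            have : ⟪gradient η z, w⟫ = fderiv ℝ η z w :=
              InnerProductSpace.toDual_symm_apply
            rw [← this]; exact htan0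
          have hslope := hasDerivAt_iff_tendsto_slope.1 hφder
          have hsl : ∀ᶠ h in 𝓝[≠] (0:ℝ), slope (fun h : ℝ => η (z + h • w)) 0 h < ζ / C :=
            hslope.eventually_lt_const (lt_of_le_of_lt hfval (by positivity))
          have hmono : 𝓝[>] (0:ℝ) ≤ 𝓝[≠] (0:ℝ) :=
            nhdsWithin_mono 0 (fun h hh => ne_of_gt hh)
          have hsmall : ∀ᶠ h in 𝓝[>] (0:ℝ), ‖h • w‖ < rz := by
            have : Tendsto (fun h : ℝ => ‖h • w‖) (𝓝[>] 0) (𝓝 ‖(0:ℝ) • w‖) :=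
              ((continuous_id.smul continuous_const).norm.tendsto 0).mono_left
                nhdsWithin_le_nhds
            simp only [zero_smul, norm_zero] at this
            exact this.eventually_lt_const hrz
          filter_upwards [hsl.filter_mono hmono, hsmall, self_mem_nhdsWithin]
            with h hh hsm hI
          have hI' : 0 < h := hI
          have hball : z + h • w ∈ Metric.ball z rz := by
            rw [Metric.mem_ball, dist_eq_norm]
            simpa using hsm
          have := hreg _ hball
          have hφh : η (z + h • w) < (ζ / C) * h := by
            rw [slope_def_field] at hh
            have : (η (z + h • w) - η (z + (0:ℝ) • w)) / (h - 0) < ζ / C := hh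
            simp only [zero_smul, add_zero, hz0, sub_zero] at this
            calc η (z + h • w) = (η (z + h • w) / h) * h := by field_simp
              _ < (ζ / C) * h := by
                  apply mul_lt_mul_of_pos_right _ hI'
                  exact this
          have hmax : max (η (z + h • w)) 0 ≤ (ζ / C) * h := by
            apply max_le hφh.le (by positivity)
          calc Metric.infDist (z + h • w) M ≤ C * max (η (z + h • w)) 0 := hreg _ hball
            _ ≤ C * ((ζ / C) * h) := mul_le_mul_of_nonneg_left hmax hC.le
            _ = ζ * h := by field_simp
        have hmapT : Tendsto (fun u => u - t) (𝓝[>] t) (𝓝[>] (0:ℝ)) := by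
          apply tendsto_nhdsWithin_of_tendsto_nhds_of_eventually_within
          · have : Tendsto (fun u : ℝ => u - t) (𝓝 t) (𝓝 (t - t)) :=
              (continuous_id.sub continuous_const).tendsto t
            rw [sub_self] at this
            exact this.mono_left nhdsWithin_le_nhds
          · filter_upwards [self_mem_nhdsWithin] with u hu
            exact sub_pos.2 (mem_Ioi.1 hu)
        apply Filter.Eventually.frequently
        filter_upwards [hE1, hmapT.eventually hE2, self_mem_nhdsWithin]
          with u hu1 hu2 huI
        have hut : 0 < u - t := sub_pos.2 huI
        have hkey : d u - d t ≤ (u - t) * ((K₀ : ℝ) * d t + 2 * ζ) := by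
          have htri : d u ≤ Metric.infDist (z + (u - t) • w) M
              + dist (x u) (z + (u - t) • w) :=
            Metric.infDist_le_infDist_add_dist
          have hdist : dist (x u) (z + (u - t) • w)
              ≤ ζ * (u - t) + d t + (u - t) * ((K₀ : ℝ) * d t) := by
            have hsplit : x u - (z + (u - t) • w) =
                (x u - x t - (u - t) • f t (x t)) + (x t - z)
                  + (u - t) • (f t (x t) - w) := by
              rw [smul_sub]; abel
            rw [dist_eq_norm, hsplit]
            calc ‖(x u - x t - (u - t) • f t (x t)) + (x t - z)
                  + (u - t) • (f t (x t) - w)‖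
                ≤ ‖x u - x t - (u - t) • f t (x t)‖ + ‖x t - z‖
                  + ‖(u - t) • (f t (x t) - w)‖ := norm_add₃_le
              _ ≤ ζ * (u - t) + d t + (u - t) * ((K₀ : ℝ) * d t) := by
                  apply add_le_add (add_le_add hu1 _) _
                  · rw [← dist_eq_norm]; exact le_of_eq hzd
                  · rw [norm_smul, Real.norm_eq_abs, abs_of_pos hut]
                    exact mul_le_mul_of_nonneg_left hLipt hut.le
          have := htri.trans (add_le_add hu2 hdist)
          nlinarith
        rw [inv_mul_lt_iff₀ hut]
        have hK₀K : (K₀ : ℝ) * d t ≤ K * d t :=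
          mul_le_mul_of_nonneg_right (by rw [hKdef]; linarith) (hdnn t)
        have hfinal : (K₀ : ℝ) * d t + 2 * ζ < r := by rw [hζ]; nlinarith
        calc d u - d t ≤ (u - t) * ((K₀ : ℝ) * d t + 2 * ζ) := hkey
          _ < (u - t) * r := mul_lt_mul_of_pos_left hfinal hut
    · exact le_of_eq hds
    · intro u _; simp
  have := hgron b ⟨hsb.le, le_refl b⟩
  rw [gronwallBound_ε0_δ0] at this
  exact absurd this (not_le.2 (hpos b hsb hbt₁))
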